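/- Let k ∈ {1,2} and C ≥ 1. There exists a constant C″ depending only on C and k such that: for all real numbers H, h with 0 < H ≤ 1 and h = H^{(2k+1)/k} (i.e., h = H³ for k = 1 and h = H^{5/2} for k = 2) and all nonnegative reals b₀, t₀, p₁, a₁, s₁, q₁, b₁, t₁ satisfying b₀ ≤ C·H^k, t₀ ≤ C·H^{k+1}, p₁ ≤ C(H·b₀ + t₀ + h^k), a₁ ≤ C(p₁ + b₀² + h^k), s₁ ≤ C(h·a₁ + b₀·t₀ + h^{k+1}), q₁ ≤ C(h·a₁ + s₁ + h^k), and b₁ ≤ C(q₁ + a₁·b₀ + h^k), one has q₁ + b₁ ≤ C″·h^k; that is, under the scaling h = H³ (k = 1) or h = H^{5/2} (k = 2), the final-step two-level energy errors are of the same (optimal) order h^k as the finite element error on the fine mesh. -/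

import Mathlib

set_option maxHeartbeats 1000000 in
/-- Two-level decoupled Algorithm A (Lemma 4.1 and the following Remark):
under the scaling `h = H^((2k+1)/k)` (i.e. `h = H³` for `k = 1`, `h = H^(5/2)`
for `k = 2`), the final-step two-level energy errors are of the optimal order
`h^k`. -/
theorem two_level_optimal_scaling (k : ℕ) (hk : k = 1 ∨ k = 2) (C : ℝ) (hC : 1 ≤ C) :
    ∃ C'' : ℝ, ∀ H h b₀ t₀ p₁ a₁ s₁ q₁ b₁ : ℝ,
      0 < H → H ≤ 1 →
      h = H ^ ((2 * (k : ℝ) + 1) / k) →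
      0 ≤ b₀ → 0 ≤ t₀ → 0 ≤ p₁ → 0 ≤ a₁ → 0 ≤ s₁ → 0 ≤ q₁ → 0 ≤ b₁ →
      b₀ ≤ C * H ^ k →
      t₀ ≤ C * H ^ (k + 1) →
      p₁ ≤ C * (H * b₀ + t₀ + h ^ k) →
      a₁ ≤ C * (p₁ + b₀ ^ 2 + h ^ k) →
      s₁ ≤ C * (h * a₁ + b₀ * t₀ + h ^ (k + 1)) →
      q₁ ≤ C * (h * a₁ + s₁ + h ^ k) →
      b₁ ≤ C * (q₁ + a₁ * b₀ + h ^ k) →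
      q₁ + b₁ ≤ C'' * h ^ k := by
  refine ⟨100 * C ^ 6, ?_⟩
  intro H h b₀ t₀ p₁ a₁ s₁ q₁ b₁ hH hH1 hh hb₀0 ht₀0 hp0 ha0 hs0 hq0 hb10 hb₀ ht₀ hp ha hs hq hb
  have hC0 : (0:ℝ) < C := lt_of_lt_of_le one_pos hC
  rcases hk with rfl | rfl
  · -- k = 1 : h = H ^ 3
    have hh3 : h = H ^ 3 := by
      rw [hh, show (2 * ((1:ℕ):ℝ) + 1) / ((1:ℕ):ℝ) = ((3:ℕ):ℝ) by push_cast; ring,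
        Real.rpow_natCast]
    subst hh3
    simp only [pow_one] at hp ha hq hb hb₀ ⊢
    norm_num at ht₀
    rw [show ((H ^ 3 : ℝ)) ^ (1 + 1) = H ^ 6 by ring] at hs
    have h32 : H ^ 3 ≤ H ^ 2 := pow_le_pow_of_le_one hH.le hH1 (by norm_num)
    have h21 : H ^ 2 ≤ 1 := pow_le_one₀ hH.le hH1
    have e1 : H * b₀ ≤ C * H ^ 2 :=
      calc H * b₀ ≤ H * (C * H) := mul_le_mul_of_nonneg_left hb₀ hH.le
        _ = C * H ^ 2 := by ring
    have e2 : H ^ 3 ≤ C * H ^ 2 :=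
      h32.trans (le_mul_of_one_le_left (by positivity) hC)
    have hp' : p₁ ≤ 3 * C ^ 2 * H ^ 2 :=
      calc p₁ ≤ C * (H * b₀ + t₀ + H ^ 3) := hp
        _ ≤ C * (3 * (C * H ^ 2)) := by
            apply mul_le_mul_of_nonneg_left _ hC0.le; linarith
        _ = 3 * C ^ 2 * H ^ 2 := by ring
    have eb2 : b₀ ^ 2 ≤ C ^ 2 * H ^ 2 :=
      calc b₀ ^ 2 ≤ (C * H) ^ 2 := pow_le_pow_left₀ hb₀0 hb₀ 2
        _ = C ^ 2 * H ^ 2 := by ring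
    have e3 : H ^ 3 ≤ C ^ 2 * H ^ 2 :=
      h32.trans (le_mul_of_one_le_left (by positivity) (one_le_pow₀ hC))
    have e3' : 3 * C ^ 2 * H ^ 2 ≤ 3 * (C ^ 2 * H ^ 2) := le_of_eq (by ring)
    have ha' : a₁ ≤ 5 * C ^ 3 * H ^ 2 :=
      calc a₁ ≤ C * (p₁ + b₀ ^ 2 + H ^ 3) := ha
        _ ≤ C * (5 * (C ^ 2 * H ^ 2)) := by
            apply mul_le_mul_of_nonneg_left _ hC0.le; linarith
        _ = 5 * C ^ 3 * H ^ 2 := by ring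
    have haconst : a₁ ≤ 5 * C ^ 3 :=
      calc a₁ ≤ 5 * C ^ 3 * H ^ 2 := ha'
        _ = (5 * C ^ 3) * H ^ 2 := by ring
        _ ≤ (5 * C ^ 3) * 1 := mul_le_mul_of_nonneg_left h21 (by positivity)
        _ = 5 * C ^ 3 := by ring
    have hha : H ^ 3 * a₁ ≤ 5 * C ^ 3 * H ^ 3 :=
      calc H ^ 3 * a₁ ≤ H ^ 3 * (5 * C ^ 3) :=
            mul_le_mul_of_nonneg_left haconst (by positivity)
        _ = 5 * C ^ 3 * H ^ 3 := by ring
    have hbt : b₀ * t₀ ≤ C ^ 2 * H ^ 3 :=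
      calc b₀ * t₀ ≤ (C * H) * (C * H ^ 2) := mul_le_mul hb₀ ht₀ ht₀0 (by positivity)
        _ = C ^ 2 * H ^ 3 := by ring
    have h63 : H ^ 6 ≤ H ^ 3 := pow_le_pow_of_le_one hH.le hH1 (by norm_num)
    have e6 : H ^ 6 ≤ C ^ 3 * H ^ 3 :=
      h63.trans (le_mul_of_one_le_left (by positivity) (one_le_pow₀ hC))
    have e8 : C ^ 2 * H ^ 3 ≤ C ^ 3 * H ^ 3 :=
      mul_le_mul_of_nonneg_right (pow_le_pow_right₀ hC (by norm_num)) (by positivity)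
    have hs' : s₁ ≤ 7 * C ^ 4 * H ^ 3 :=
      calc s₁ ≤ C * (H ^ 3 * a₁ + b₀ * t₀ + H ^ 6) := hs
        _ ≤ C * (7 * (C ^ 3 * H ^ 3)) := by
            apply mul_le_mul_of_nonneg_left _ hC0.le; linarith
        _ = 7 * C ^ 4 * H ^ 3 := by ring
    have e9 : H ^ 3 ≤ C ^ 4 * H ^ 3 :=
      le_mul_of_one_le_left (by positivity) (one_le_pow₀ hC)
    have e8b : C ^ 3 * H ^ 3 ≤ C ^ 4 * H ^ 3 :=
      mul_le_mul_of_nonneg_right (pow_le_pow_right₀ hC (by norm_num)) (by positivity)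
    have hq' : q₁ ≤ 13 * C ^ 5 * H ^ 3 :=
      calc q₁ ≤ C * (H ^ 3 * a₁ + s₁ + H ^ 3) := hq
        _ ≤ C * (13 * (C ^ 4 * H ^ 3)) := by
            apply mul_le_mul_of_nonneg_left _ hC0.le; linarith
        _ = 13 * C ^ 5 * H ^ 3 := by ring
    have hab : a₁ * b₀ ≤ 5 * C ^ 4 * H ^ 3 :=
      calc a₁ * b₀ ≤ (5 * C ^ 3 * H ^ 2) * (C * H) := mul_le_mul ha' hb₀ hb₀0 (by positivity)
        _ = 5 * C ^ 4 * H ^ 3 := by ring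
    have e10 : H ^ 3 ≤ C ^ 5 * H ^ 3 :=
      le_mul_of_one_le_left (by positivity) (one_le_pow₀ hC)
    have e8c : C ^ 4 * H ^ 3 ≤ C ^ 5 * H ^ 3 :=
      mul_le_mul_of_nonneg_right (pow_le_pow_right₀ hC (by norm_num)) (by positivity)
    have hb' : b₁ ≤ 19 * C ^ 6 * H ^ 3 :=
      calc b₁ ≤ C * (q₁ + a₁ * b₀ + H ^ 3) := hb
        _ ≤ C * (19 * (C ^ 5 * H ^ 3)) := by
            apply mul_le_mul_of_nonneg_left _ hC0.le; linarith
        _ = 19 * C ^ 6 * H ^ 3 := by ring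
    have e11 : C ^ 5 * H ^ 3 ≤ C ^ 6 * H ^ 3 :=
      mul_le_mul_of_nonneg_right (pow_le_pow_right₀ hC (by norm_num)) (by positivity)
    have epos : (0:ℝ) ≤ C ^ 6 * H ^ 3 := by positivity
    calc q₁ + b₁ ≤ 13 * C ^ 5 * H ^ 3 + 19 * C ^ 6 * H ^ 3 := add_le_add hq' hb'
      _ ≤ 100 * C ^ 6 * H ^ 3 := by linarith
  · -- k = 2 : h = H ^ (5/2)
    have hh' : h = H ^ ((5:ℝ)/2) := by rw [hh]; norm_num
    have h0 : 0 < h := by rw [hh']; exact Real.rpow_pos_of_pos hH _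
    have h2 : h ^ 2 = H ^ 5 := by
      rw [hh', ← Real.rpow_natCast (H ^ ((5:ℝ)/2)) 2, ← Real.rpow_mul hH.le]
      norm_num
    have hle : h ≤ H ^ 2 := by
      rw [hh', show H ^ 2 = H ^ ((2:ℕ):ℝ) from (Real.rpow_natCast H 2).symm]
      exact Real.rpow_le_rpow_of_exponent_ge hH hH1 (by norm_num)
    have h1 : h ≤ 1 := hle.trans (pow_le_one₀ hH.le hH1)
    norm_num at ht₀
    rw [h2] at hp ha hq hb ⊢
    rw [show h ^ (2 + 1) = h * h ^ 2 from by ring, h2] at hs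
    have h53 : H ^ 5 ≤ H ^ 3 := pow_le_pow_of_le_one hH.le hH1 (by norm_num)
    have h43 : H ^ 4 ≤ H ^ 3 := pow_le_pow_of_le_one hH.le hH1 (by norm_num)
    have e1 : H * b₀ ≤ C * H ^ 3 :=
      calc H * b₀ ≤ H * (C * H ^ 2) := mul_le_mul_of_nonneg_left hb₀ hH.le
        _ = C * H ^ 3 := by ring
    have e2 : H ^ 5 ≤ C * H ^ 3 :=
      h53.trans (le_mul_of_one_le_left (by positivity) hC)
    have hp' : p₁ ≤ 3 * C ^ 2 * H ^ 3 :=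
      calc p₁ ≤ C * (H * b₀ + t₀ + H ^ 5) := hp
        _ ≤ C * (3 * (C * H ^ 3)) := by
            apply mul_le_mul_of_nonneg_left _ hC0.le; linarith
        _ = 3 * C ^ 2 * H ^ 3 := by ring
    have eb2 : b₀ ^ 2 ≤ C ^ 2 * H ^ 3 :=
      calc b₀ ^ 2 ≤ (C * H ^ 2) ^ 2 := pow_le_pow_left₀ hb₀0 hb₀ 2
        _ = C ^ 2 * H ^ 4 := by ring
        _ ≤ C ^ 2 * H ^ 3 := mul_le_mul_of_nonneg_left h43 (by positivity)
    have e3 : H ^ 5 ≤ C ^ 2 * H ^ 3 :=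
      h53.trans (le_mul_of_one_le_left (by positivity) (one_le_pow₀ hC))
    have ha' : a₁ ≤ 5 * C ^ 3 * H ^ 3 :=
      calc a₁ ≤ C * (p₁ + b₀ ^ 2 + H ^ 5) := ha
        _ ≤ C * (5 * (C ^ 2 * H ^ 3)) := by
            apply mul_le_mul_of_nonneg_left _ hC0.le; linarith
        _ = 5 * C ^ 3 * H ^ 3 := by ring
    have hha : h * a₁ ≤ 5 * C ^ 3 * H ^ 5 :=
      calc h * a₁ ≤ H ^ 2 * (5 * C ^ 3 * H ^ 3) := mul_le_mul hle ha' ha0 (by positivity)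
        _ = 5 * C ^ 3 * H ^ 5 := by ring
    have hbt : b₀ * t₀ ≤ C ^ 2 * H ^ 5 :=
      calc b₀ * t₀ ≤ (C * H ^ 2) * (C * H ^ 3) := mul_le_mul hb₀ ht₀ ht₀0 (by positivity)
        _ = C ^ 2 * H ^ 5 := by ring
    have e6 : h * H ^ 5 ≤ C ^ 3 * H ^ 5 :=
      calc h * H ^ 5 ≤ 1 * H ^ 5 := mul_le_mul_of_nonneg_right h1 (by positivity)
        _ = H ^ 5 := by ring
        _ ≤ C ^ 3 * H ^ 5 := le_mul_of_one_le_left (by positivity) (one_le_pow₀ hC)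
    have e8 : C ^ 2 * H ^ 5 ≤ C ^ 3 * H ^ 5 :=
      mul_le_mul_of_nonneg_right (pow_le_pow_right₀ hC (by norm_num)) (by positivity)
    have hs' : s₁ ≤ 7 * C ^ 4 * H ^ 5 :=
      calc s₁ ≤ C * (h * a₁ + b₀ * t₀ + h * H ^ 5) := hs
        _ ≤ C * (7 * (C ^ 3 * H ^ 5)) := by
            apply mul_le_mul_of_nonneg_left _ hC0.le; linarith
        _ = 7 * C ^ 4 * H ^ 5 := by ring
    have e9 : H ^ 5 ≤ C ^ 4 * H ^ 5 :=
      le_mul_of_one_le_left (by positivity) (one_le_pow₀ hC)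
    have e8b : C ^ 3 * H ^ 5 ≤ C ^ 4 * H ^ 5 :=
      mul_le_mul_of_nonneg_right (pow_le_pow_right₀ hC (by norm_num)) (by positivity)
    have hq' : q₁ ≤ 13 * C ^ 5 * H ^ 5 :=
      calc q₁ ≤ C * (h * a₁ + s₁ + H ^ 5) := hq
        _ ≤ C * (13 * (C ^ 4 * H ^ 5)) := by
            apply mul_le_mul_of_nonneg_left _ hC0.le; linarith
        _ = 13 * C ^ 5 * H ^ 5 := by ring
    have hab : a₁ * b₀ ≤ 5 * C ^ 4 * H ^ 5 :=
      calc a₁ * b₀ ≤ (5 * C ^ 3 * H ^ 3) * (C * H ^ 2) := mul_le_mul ha' hb₀ hb₀0 (by positivity)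
        _ = 5 * C ^ 4 * H ^ 5 := by ring
    have e10 : H ^ 5 ≤ C ^ 5 * H ^ 5 :=
      le_mul_of_one_le_left (by positivity) (one_le_pow₀ hC)
    have e8c : C ^ 4 * H ^ 5 ≤ C ^ 5 * H ^ 5 :=
      mul_le_mul_of_nonneg_right (pow_le_pow_right₀ hC (by norm_num)) (by positivity)
    have hb' : b₁ ≤ 19 * C ^ 6 * H ^ 5 :=
      calc b₁ ≤ C * (q₁ + a₁ * b₀ + H ^ 5) := hb
        _ ≤ C * (19 * (C ^ 5 * H ^ 5)) := by
            apply mul_le_mul_of_nonneg_left _ hC0.le; linarith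
        _ = 19 * C ^ 6 * H ^ 5 := by ring
    have e11 : C ^ 5 * H ^ 5 ≤ C ^ 6 * H ^ 5 :=
      mul_le_mul_of_nonneg_right (pow_le_pow_right₀ hC (by norm_num)) (by positivity)
    have epos : (0:ℝ) ≤ C ^ 6 * H ^ 5 := by positivity
    calc q₁ + b₁ ≤ 13 * C ^ 5 * H ^ 5 + 19 * C ^ 6 * H ^ 5 := add_le_add hq' hb'
      _ ≤ 100 * C ^ 6 * H ^ 5 := by linarith
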